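/- Let ℙ be a projector on ℝⁿ (ℙ² = ℙ) with ℙ ≠ 0 and ℙ ≠ I. Then ‖I − ℙ‖₂ = ‖ℙ‖₂. -/

import Mathlib

open scoped RealInnerProductSpace

variable {E : Type*} [NormedAddCommGroup E] [InnerProductSpace ℝ E]

lemma one_le_opNorm_of_idem (T : E →L[ℝ] E) (h : ∀ x, T (T x) = T x) (h0 : T ≠ 0) :
    1 ≤ ‖T‖ := by
  obtain ⟨w, hw⟩ : ∃ w, T w ≠ 0 := by
    by_contra hc
    push_neg at hc
    exact h0 (ContinuousLinearMap.ext fun x => hc x)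
  have h1 : ‖T w‖ = ‖T (T w)‖ := by rw [h]
  have h2 : ‖T (T w)‖ ≤ ‖T‖ * ‖T w‖ := T.le_opNorm _
  have h3 : (0:ℝ) < ‖T w‖ := norm_pos_iff.mpr hw
  nlinarith

lemma key_pointwise (T : E →L[ℝ] E) (h : ∀ x, T (T x) = T x) (h0 : T ≠ 0) (x : E) :
    ‖x - T x‖ ≤ ‖T‖ * ‖x‖ := by
  have hT1 : 1 ≤ ‖T‖ := one_le_opNorm_of_idem T h h0
  set u := T x with hu
  set v := x - T x with hv
  have hx : x = u + v := by simp [hu, hv]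
  have hTu : T u = u := h x
  have hTv : T v = 0 := by simp [hv, map_sub, h x]
  by_cases hv0 : v = 0
  · simp only [hv0, norm_zero]
    positivity
  by_cases hu0 : u = 0
  · have : v = x := by rw [hx, hu0, zero_add]
    rw [this]
    nlinarith [norm_nonneg x]
  -- main case
  set t : ℝ := inner ℝ u v with ht
  have hvn : (0:ℝ) < ‖v‖ := norm_pos_iff.mpr hv0
  have hun : (0:ℝ) < ‖u‖ := norm_pos_iff.mpr hu0
  set y := u - (t / ‖v‖^2) • v with hy
  have hTy : T y = u := by
    simp [hy, map_sub, map_smul, hTu, hTv]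
  have hyn : ‖u‖ ≤ ‖T‖ * ‖y‖ := by
    calc ‖u‖ = ‖T y‖ := by rw [hTy]
    _ ≤ ‖T‖ * ‖y‖ := T.le_opNorm _
  have hy2 : ‖y‖^2 = ‖u‖^2 - t^2 / ‖v‖^2 := by
    have := norm_sub_sq_real u ((t / ‖v‖^2) • v)
    rw [hy]
    rw [this, real_inner_smul_right, norm_smul, ← ht, Real.norm_eq_abs, mul_pow, sq_abs]
    field_simp
    ring
  have hx2 : ‖x‖^2 = ‖u‖^2 + 2*t + ‖v‖^2 := by
    rw [hx, norm_add_sq_real, ← ht]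
  -- ‖v‖^2 * ‖y‖^2 ≤ ‖u‖^2 * ‖x‖^2
  have hkey : ‖v‖^2 * ‖y‖^2 ≤ ‖u‖^2 * ‖x‖^2 := by
    rw [hy2, hx2]
    have h1 : ‖v‖^2 * (‖u‖^2 - t^2/‖v‖^2) = ‖u‖^2*‖v‖^2 - t^2 := by
      field_simp
    rw [h1]
    nlinarith [sq_nonneg (t + ‖u‖^2)]
  have hvy : ‖v‖ * ‖y‖ ≤ ‖u‖ * ‖x‖ := by
    nlinarith [norm_nonneg y, norm_nonneg x, norm_nonneg u, norm_nonneg v,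
      mul_nonneg (norm_nonneg v) (norm_nonneg y), mul_nonneg (norm_nonneg u) (norm_nonneg x)]
  -- conclude
  have hTnn : (0:ℝ) ≤ ‖T‖ := norm_nonneg T
  nlinarith [mul_le_mul_of_nonneg_left hvy hTnn]

open Matrix

/-- Spectral norm (operator 2-norm) of a real matrix. -/
noncomputable def spec {m n : ℕ} (A : Matrix (Fin m) (Fin n) ℝ) : ℝ :=
  ‖LinearMap.toContinuousLinearMap (Matrix.toEuclideanLin A)‖

/-- Kato's equality: for a projector ℙ ≠ 0, ℙ ≠ I on ℝⁿ,
‖I − ℙ‖₂ = ‖ℙ‖₂. -/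
theorem norm_one_sub_projector {n : ℕ}
    (P : Matrix (Fin n) (Fin n) ℝ) (hidem : P * P = P)
    (h0 : P ≠ 0) (h1 : P ≠ 1) :
    spec (1 - P) = spec P := by
  set T : EuclideanSpace ℝ (Fin n) →L[ℝ] EuclideanSpace ℝ (Fin n) :=
    Matrix.toEuclideanCLM (𝕜 := ℝ) P with hT
  have hspecP : spec P = ‖T‖ := rfl
  have hspecQ : spec (1 - P) = ‖1 - T‖ := by
    have e : LinearMap.toContinuousLinearMap (Matrix.toEuclideanLin (1 - P))
        = Matrix.toEuclideanCLM (𝕜 := ℝ) (n := Fin n) (1 - P) := rfl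
    rw [spec, e, map_sub, _root_.map_one, hT]
  have hinj : Function.Injective (Matrix.toEuclideanCLM (𝕜 := ℝ) (n := Fin n)) :=
    (Matrix.toEuclideanCLM (𝕜 := ℝ) (n := Fin n)).injective
  have hT0 : T ≠ 0 := by
    intro hc
    apply h0
    apply hinj
    rw [map_zero, ← hT, hc]
  have hQ0 : 1 - T ≠ 0 := by
    intro hc
    apply h1
    apply hinj
    rw [_root_.map_one, ← hT]
    exact (sub_eq_zero.mp hc).symm
  have hTT : T * T = T := by
    rw [hT, ← _root_.map_mul, hidem]
  have hidemT : ∀ x, T (T x) = T x := fun x =>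
    congrFun (congrArg DFunLike.coe hTT) x
  have hidemQ : ∀ x, (1 - T) ((1 - T) x) = (1 - T) x := by
    intro x
    simp [ContinuousLinearMap.sub_apply, map_sub, hidemT x]
  rw [hspecP, hspecQ]
  apply le_antisymm
  · apply ContinuousLinearMap.opNorm_le_bound _ (norm_nonneg T)
    intro x
    have : (1 - T) x = x - T x := by
      simp [ContinuousLinearMap.sub_apply]
    rw [this]
    exact key_pointwise T hidemT hT0 x
  · apply ContinuousLinearMap.opNorm_le_bound _ (norm_nonneg (1 - T))
    intro x
    have : T x = x - (1 - T) x := by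
      simp [ContinuousLinearMap.sub_apply]
    rw [this]
    exact key_pointwise (1 - T) hidemQ hQ0 x
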